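/- Let P(t) be the solution on [0,T] of the matrix Riccati equation dP/dt − P²/λ + Q + Q̄ = 0 with P(T) = Q_T + Q̄_T, and let Σ(t) solve dΣ/dt − (1/λ)(ΣP + PΣ) − (1/λ)Σ² + S*Q̄S − (Q̄S + S*Q̄) = 0 with Σ(T) = S_T*Q̄_T S_T − (Q̄_T S_T + S_T*Q̄_T). Then the function V(X,t) = (1/2) E[X* P(t) X] + (1/2) (E X)* Σ(t) (E X) on H×[0,T] satisfies the Bellman equation ∂V/∂t − (1/(2λ))||D_X V||² + (1/2) E[X*(Q+Q̄)X] + (1/2) (E X)*(S*Q̄S − Q̄S − S*Q̄)(E X) = 0 with terminal condition V(X,T) = (1/2) E[X*(Q_T+Q̄_T)X] + (1/2)(E X)*(S_T*Q̄_T S_T − Q̄_T S_T − S_T*Q̄_T)(E X), and its gradient is D_X V(X,t) = P(t)X + Σ(t) E X. -/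

import Mathlib

open MeasureTheory Set ContinuousLinearMap
open scoped RealInnerProductSpace

variable {Ω : Type*} [MeasurableSpace Ω] {n : ℕ}

/-- The expectation `E X ∈ ℝⁿ` of a square-integrable random variable `X ∈ L²(Ω;ℝⁿ)`. -/
noncomputable def expVal (μ : Measure Ω) [IsProbabilityMeasure μ]
    (X : Lp (EuclideanSpace ℝ (Fin n)) 2 μ) : EuclideanSpace ℝ (Fin n) :=
  ∫ ω, X ω ∂μ

/-- The quadratic functional `V(X,t) = (1/2) E[X* P(t) X] + (1/2) (E X)* Σ(t) (E X)`. -/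
noncomputable def Vq (μ : Measure Ω) [IsProbabilityMeasure μ]
    (P Sg : ℝ → EuclideanSpace ℝ (Fin n) →L[ℝ] EuclideanSpace ℝ (Fin n))
    (X : Lp (EuclideanSpace ℝ (Fin n)) 2 μ) (t : ℝ) : ℝ :=
  1 / 2 * (∫ ω, ⟪X ω, P t (X ω)⟫ ∂μ) + 1 / 2 * ⟪expVal μ X, Sg t (expVal μ X)⟫

/-- The random variable `P(t) X + Σ(t) (E X) ∈ L²(Ω;ℝⁿ)` (the gradient of `Vq`). -/
noncomputable def gradQ (μ : Measure Ω) [IsProbabilityMeasure μ]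
    (P Sg : ℝ → EuclideanSpace ℝ (Fin n) →L[ℝ] EuclideanSpace ℝ (Fin n))
    (X : Lp (EuclideanSpace ℝ (Fin n)) 2 μ) (t : ℝ) :
    Lp (EuclideanSpace ℝ (Fin n)) 2 μ :=
  (P t).compLp X + Lp.const 2 μ (Sg t (expVal μ X))

/- ============================ Auxiliary material ============================ -/

section GronwallAux

/-- Backward-in-time uniqueness via Grönwall: a function whose derivative is controlled
linearly by its norm and which vanishes at the right endpoint vanishes identically. -/
lemma aux_ode_zero {F : Type*} [NormedAddCommGroup F] [NormedSpace ℝ F]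
    {T K : ℝ} {f f' : ℝ → F}
    (hderiv : ∀ τ ∈ Icc (0:ℝ) T, HasDerivWithinAt f (f' τ) (Icc 0 T) τ)
    (hbound : ∀ τ ∈ Icc (0:ℝ) T, ‖f' τ‖ ≤ K * ‖f τ‖)
    (hend : f T = 0) : ∀ τ ∈ Icc (0:ℝ) T, f τ = 0 := by
  have hmaps : MapsTo (fun s : ℝ => T - s) (Icc 0 T) (Icc 0 T) := fun s hs =>
    ⟨show (0:ℝ) ≤ T - s by linarith [hs.2], show T - s ≤ T by linarith [hs.1]⟩
  have gderiv : ∀ s ∈ Icc (0:ℝ) T,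
      HasDerivWithinAt (fun s => f (T - s)) ((-1 : ℝ) • f' (T - s)) (Icc 0 T) s := by
    intro s hs
    exact HasDerivWithinAt.scomp s (hderiv _ (hmaps hs))
      (((hasDerivWithinAt_id s (Icc 0 T)).const_sub T)) hmaps
  have gcont : ContinuousOn (fun s => f (T - s)) (Icc 0 T) := fun s hs =>
    (gderiv s hs).continuousWithinAt
  have key : ∀ s ∈ Icc (0:ℝ) T, ‖f (T - s)‖ ≤ gronwallBound 0 K 0 (s - 0) := by
    apply norm_le_gronwallBound_of_norm_deriv_right_le gcont
      (f' := fun s => (-1 : ℝ) • f' (T - s))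
    · intro s hs
      have hmem : Icc (0:ℝ) T ∈ nhdsWithin s (Ici s) := by
        refine mem_nhdsWithin.2 ⟨Iio T, isOpen_Iio, hs.2, ?_⟩
        rintro x ⟨hx1, hx2⟩
        exact ⟨le_trans hs.1 hx2, le_of_lt hx1⟩
      exact (gderiv s ⟨hs.1, le_of_lt hs.2⟩).mono_of_mem_nhdsWithin hmem
    · simp [hend]
    · intro s hs
      have h := hbound (T - s) (hmaps ⟨hs.1, le_of_lt hs.2⟩)
      simpa [norm_smul] using h
  intro τ hτ
  have h := key (T - τ) (hmaps hτ)
  rw [gronwallBound_ε0_δ0] at h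
  have h2 : ‖f τ‖ ≤ 0 := by simpa [sub_sub_cancel] using h
  simpa using norm_le_zero_iff.1 h2

end GronwallAux

section AdjAux

/-- The adjoint on endomorphisms of a real Hilbert space, as a continuous linear map. -/
noncomputable def adjCLM (E : Type*) [NormedAddCommGroup E] [InnerProductSpace ℝ E]
    [CompleteSpace E] : (E →L[ℝ] E) →L[ℝ] (E →L[ℝ] E) :=
  LinearMap.mkContinuous
    { toFun := fun A => adjoint A
      map_add' := fun A B => map_add _ A B
      map_smul' := fun r A => by
        simpa using LinearIsometryEquiv.map_smulₛₗ (ContinuousLinearMap.adjoint (𝕜 := ℝ)) r A }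
    1 (fun A => by
      simpa using le_of_eq (LinearIsometryEquiv.norm_map (ContinuousLinearMap.adjoint (𝕜 := ℝ)) A))

@[simp] lemma adjCLM_apply {E : Type*} [NormedAddCommGroup E] [InnerProductSpace ℝ E]
    [CompleteSpace E] (A : E →L[ℝ] E) : adjCLM E A = adjoint A := rfl

lemma norm_adj {E : Type*} [NormedAddCommGroup E] [InnerProductSpace ℝ E]
    [CompleteSpace E] (A : E →L[ℝ] E) : ‖adjoint A‖ = ‖A‖ :=
  LinearIsometryEquiv.norm_map (ContinuousLinearMap.adjoint (𝕜 := ℝ)) A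

lemma sa_inner {E : Type*} [NormedAddCommGroup E] [InnerProductSpace ℝ E]
    [CompleteSpace E] {A : E →L[ℝ] E} (hA : adjoint A = A) (u v : E) :
    ⟪A u, v⟫ = ⟪u, A v⟫ := by
  rw [← adjoint_inner_left A v u, hA]

/-- A quadratic-form gradient lemma: the gradient of `y ↦ (1/2)⟪y, A y⟫` at `x` for a
self-adjoint `A` is `A x`. -/
lemma hasGradientAt_half_inner {F : Type*} [NormedAddCommGroup F] [InnerProductSpace ℝ F]
    [CompleteSpace F] (A : F →L[ℝ] F) (hA : ∀ u v : F, ⟪A u, v⟫ = ⟪u, A v⟫) (x : F) :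
    HasGradientAt (fun y => 1 / 2 * ⟪y, A y⟫) (A x) x := by
  rw [hasGradientAt_iff_hasFDerivAt]
  have h := (HasFDerivAt.inner ℝ (hasFDerivAt_id x) A.hasFDerivAt).const_mul (1/2 : ℝ)
  refine h.congr_fderiv ?_
  ext y
  simp only [ContinuousLinearMap.coe_comp', Function.comp_apply, ContinuousLinearMap.coe_smul',
    Pi.smul_apply, ContinuousLinearMap.prod_apply, ContinuousLinearMap.coe_id', id_eq,
    fderivInnerCLM_apply, InnerProductSpace.toDual_apply_apply, smul_eq_mul]
  linarith [hA x y, real_inner_comm y (A x), real_inner_comm x (A y)]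

end AdjAux

section SA

set_option maxHeartbeats 1000000 in
/-- The solution of the first Riccati equation is self-adjoint on `[0,T]`. -/
lemma P_selfAdjoint {E : Type*} [NormedAddCommGroup E] [InnerProductSpace ℝ E] [CompleteSpace E]
    {T lam : ℝ} (hlam : 0 < lam) {Q Qb : E →L[ℝ] E}
    (hQ : IsSelfAdjoint Q) (hQb : IsSelfAdjoint Qb) {P : ℝ → E →L[ℝ] E}
    (hP : ∀ τ ∈ Icc (0:ℝ) T, HasDerivWithinAt P
      ((1 / lam) • (P τ ∘L P τ) - (Q + Qb)) (Icc 0 T) τ)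
    (hPTsa : adjoint (P T) = P T) :
    ∀ τ ∈ Icc (0:ℝ) T, adjoint (P τ) = P τ := by
  have hcont : ContinuousOn P (Icc 0 T) := fun τ hτ => (hP τ hτ).continuousWithinAt
  obtain ⟨CP, hCP⟩ := isCompact_Icc.exists_bound_of_continuousOn hcont
  set C := max CP 0 with hC
  have hC0 : 0 ≤ C := le_max_right _ _
  have hPle : ∀ τ ∈ Icc (0:ℝ) T, ‖P τ‖ ≤ C := fun τ hτ => (hCP τ hτ).trans (le_max_left _ _)
  set f : ℝ → E →L[ℝ] E := fun τ => adjoint (P τ) - P τ with hf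
  set f' : ℝ → E →L[ℝ] E := fun τ =>
    (1 / lam) • (adjoint (P τ) ∘L f τ + f τ ∘L P τ) with hf'
  have hderiv : ∀ τ ∈ Icc (0:ℝ) T, HasDerivWithinAt f (f' τ) (Icc 0 T) τ := by
    intro τ hτ
    have hD := (HasFDerivAt.comp_hasDerivWithinAt τ (adjCLM E).hasFDerivAt (hP τ hτ)).sub
      (hP τ hτ)
    have heq : adjCLM E ((1 / lam) • (P τ ∘L P τ) - (Q + Qb)) -
        ((1 / lam) • (P τ ∘L P τ) - (Q + Qb)) = f' τ := by
      simp only [map_sub, _root_.map_smul, map_add, adjCLM_apply, adjoint_comp,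
        adjoint_adjoint, isSelfAdjoint_iff'.1 hQ, isSelfAdjoint_iff'.1 hQb]
      ext x
      simp only [hf', hf, ContinuousLinearMap.sub_apply, ContinuousLinearMap.smul_apply,
        ContinuousLinearMap.add_apply, ContinuousLinearMap.comp_apply, map_sub, smul_sub]
      module
    exact (heq ▸ hD).congr (fun y _ => by simp [hf, Function.comp]) (by simp [hf, Function.comp])
  have hbound : ∀ τ ∈ Icc (0:ℝ) T, ‖f' τ‖ ≤ (2 * C / lam) * ‖f τ‖ := by
    intro τ hτ
    have h1 : ‖adjoint (P τ) ∘L f τ‖ ≤ C * ‖f τ‖ := by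
      refine (opNorm_comp_le _ _).trans ?_
      rw [norm_adj]
      exact mul_le_mul_of_nonneg_right (hPle τ hτ) (norm_nonneg _)
    have h2 : ‖f τ ∘L P τ‖ ≤ C * ‖f τ‖ := by
      refine (opNorm_comp_le _ _).trans ?_
      rw [mul_comm]
      exact mul_le_mul_of_nonneg_right (hPle τ hτ) (norm_nonneg _)
    have hnorm : ‖f' τ‖ = |1 / lam| * ‖adjoint (P τ) ∘L f τ + f τ ∘L P τ‖ := by
      show ‖(1 / lam) • (adjoint (P τ) ∘L f τ + f τ ∘L P τ)‖ = _
      exact norm_smul (1 / lam) (adjoint (P τ) ∘L f τ + f τ ∘L P τ)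
    rw [hnorm, abs_of_pos (by positivity : (0:ℝ) < 1 / lam)]
    calc 1 / lam * ‖adjoint (P τ) ∘L f τ + f τ ∘L P τ‖
        ≤ 1 / lam * (C * ‖f τ‖ + C * ‖f τ‖) := by
          refine mul_le_mul_of_nonneg_left ((norm_add_le _ _).trans (add_le_add h1 h2))
            (by positivity)
      _ = (2 * C / lam) * ‖f τ‖ := by field_simp; ring
  have hzero := aux_ode_zero hderiv hbound (by rw [hf]; simp [hPTsa])
  intro τ hτ
  have := hzero τ hτ
  rwa [hf, sub_eq_zero] at this

set_option maxHeartbeats 1000000 in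
/-- The solution of the second Riccati equation is self-adjoint on `[0,T]`. -/
lemma Sg_selfAdjoint {E : Type*} [NormedAddCommGroup E] [InnerProductSpace ℝ E] [CompleteSpace E]
    {T lam : ℝ} (hlam : 0 < lam) {Qb S : E →L[ℝ] E} (hQb : IsSelfAdjoint Qb)
    {P Sg : ℝ → E →L[ℝ] E}
    (hPsa : ∀ τ ∈ Icc (0:ℝ) T, adjoint (P τ) = P τ)
    (hPc : ContinuousOn P (Icc 0 T))
    (hSg : ∀ τ ∈ Icc (0:ℝ) T, HasDerivWithinAt Sg
      ((1 / lam) • (Sg τ ∘L P τ + P τ ∘L Sg τ) + (1 / lam) • (Sg τ ∘L Sg τ)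
        - adjoint S ∘L Qb ∘L S + (Qb ∘L S + adjoint S ∘L Qb)) (Icc 0 T) τ)
    (hSgTsa : adjoint (Sg T) = Sg T) :
    ∀ τ ∈ Icc (0:ℝ) T, adjoint (Sg τ) = Sg τ := by
  obtain ⟨CP, hCP⟩ := isCompact_Icc.exists_bound_of_continuousOn hPc
  have hScont : ContinuousOn Sg (Icc 0 T) := fun τ hτ => (hSg τ hτ).continuousWithinAt
  obtain ⟨CS, hCS⟩ := isCompact_Icc.exists_bound_of_continuousOn hScont
  set C := max CP 0 + max CS 0 with hC
  have hPle : ∀ τ ∈ Icc (0:ℝ) T, ‖P τ‖ ≤ C := fun τ hτ =>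
    ((hCP τ hτ).trans (le_max_left _ _)).trans (le_add_of_nonneg_right (le_max_right _ _))
  have hSle : ∀ τ ∈ Icc (0:ℝ) T, ‖Sg τ‖ ≤ C := fun τ hτ =>
    ((hCS τ hτ).trans (le_max_left _ _)).trans (le_add_of_nonneg_left (le_max_right _ _))
  set f : ℝ → E →L[ℝ] E := fun τ => adjoint (Sg τ) - Sg τ with hf
  set f' : ℝ → E →L[ℝ] E := fun τ =>
    (1 / lam) • (P τ ∘L f τ + f τ ∘L P τ + (adjoint (Sg τ) ∘L f τ + f τ ∘L Sg τ)) with hf'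
  have hderiv : ∀ τ ∈ Icc (0:ℝ) T, HasDerivWithinAt f (f' τ) (Icc 0 T) τ := by
    intro τ hτ
    have hD := (HasFDerivAt.comp_hasDerivWithinAt τ (adjCLM E).hasFDerivAt (hSg τ hτ)).sub
      (hSg τ hτ)
    have heq : adjCLM E ((1 / lam) • (Sg τ ∘L P τ + P τ ∘L Sg τ) + (1 / lam) • (Sg τ ∘L Sg τ)
        - adjoint S ∘L Qb ∘L S + (Qb ∘L S + adjoint S ∘L Qb)) -
        ((1 / lam) • (Sg τ ∘L P τ + P τ ∘L Sg τ) + (1 / lam) • (Sg τ ∘L Sg τ)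
        - adjoint S ∘L Qb ∘L S + (Qb ∘L S + adjoint S ∘L Qb)) = f' τ := by
      simp only [map_add, map_sub, _root_.map_smul, adjCLM_apply, adjoint_comp,
        adjoint_adjoint, isSelfAdjoint_iff'.1 hQb, hPsa τ hτ]
      ext x
      simp only [hf', hf, ContinuousLinearMap.sub_apply, ContinuousLinearMap.smul_apply,
        ContinuousLinearMap.add_apply, ContinuousLinearMap.comp_apply, map_sub, smul_sub,
        smul_add, map_add]
      module
    exact (heq ▸ hD).congr (fun y _ => by simp [hf, Function.comp]) (by simp [hf, Function.comp])
  have hbound : ∀ τ ∈ Icc (0:ℝ) T, ‖f' τ‖ ≤ (4 * C / lam) * ‖f τ‖ := by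
    intro τ hτ
    have h1 : ‖P τ ∘L f τ‖ ≤ C * ‖f τ‖ :=
      (opNorm_comp_le _ _).trans (mul_le_mul_of_nonneg_right (hPle τ hτ) (norm_nonneg _))
    have h2 : ‖f τ ∘L P τ‖ ≤ C * ‖f τ‖ := by
      refine (opNorm_comp_le _ _).trans ?_
      rw [mul_comm]
      exact mul_le_mul_of_nonneg_right (hPle τ hτ) (norm_nonneg _)
    have hS1 : ‖adjoint (Sg τ) ∘L f τ‖ ≤ C * ‖f τ‖ := by
      refine (opNorm_comp_le _ _).trans ?_
      rw [norm_adj]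
      exact mul_le_mul_of_nonneg_right (hSle τ hτ) (norm_nonneg _)
    have hS2 : ‖f τ ∘L Sg τ‖ ≤ C * ‖f τ‖ := by
      refine (opNorm_comp_le _ _).trans ?_
      rw [mul_comm]
      exact mul_le_mul_of_nonneg_right (hSle τ hτ) (norm_nonneg _)
    have hnorm : ‖f' τ‖ = |1 / lam| *
        ‖P τ ∘L f τ + f τ ∘L P τ + (adjoint (Sg τ) ∘L f τ + f τ ∘L Sg τ)‖ := by
      show ‖(1 / lam) • (P τ ∘L f τ + f τ ∘L P τ + (adjoint (Sg τ) ∘L f τ + f τ ∘L Sg τ))‖ = _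
      exact norm_smul (1 / lam) (P τ ∘L f τ + f τ ∘L P τ + (adjoint (Sg τ) ∘L f τ + f τ ∘L Sg τ))
    rw [hnorm, abs_of_pos (by positivity : (0:ℝ) < 1 / lam)]
    have hsum : ‖P τ ∘L f τ + f τ ∘L P τ + (adjoint (Sg τ) ∘L f τ + f τ ∘L Sg τ)‖
        ≤ 4 * (C * ‖f τ‖) := by
      calc ‖P τ ∘L f τ + f τ ∘L P τ + (adjoint (Sg τ) ∘L f τ + f τ ∘L Sg τ)‖
          ≤ ‖P τ ∘L f τ + f τ ∘L P τ‖ + (‖adjoint (Sg τ) ∘L f τ‖ + ‖f τ ∘L Sg τ‖) :=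
            (norm_add_le _ _).trans (by gcongr; exact norm_add_le _ _)
        _ ≤ ‖P τ ∘L f τ‖ + ‖f τ ∘L P τ‖ + (‖adjoint (Sg τ) ∘L f τ‖ + ‖f τ ∘L Sg τ‖) := by
            gcongr; exact norm_add_le _ _
        _ ≤ 4 * (C * ‖f τ‖) := by linarith
    calc 1 / lam * ‖P τ ∘L f τ + f τ ∘L P τ + (adjoint (Sg τ) ∘L f τ + f τ ∘L Sg τ)‖
        ≤ 1 / lam * (4 * (C * ‖f τ‖)) := mul_le_mul_of_nonneg_left hsum (by positivity)
      _ = (4 * C / lam) * ‖f τ‖ := by field_simp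
  have hzero := aux_ode_zero hderiv hbound (by rw [hf]; simp [hSgTsa])
  intro τ hτ
  have := hzero τ hτ
  rwa [hf, sub_eq_zero] at this

end SA

section Forms

variable (μ : Measure Ω) [IsProbabilityMeasure μ]

/-- `A ↦ E[⟪X, A X⟫]` as a continuous linear functional on operators. -/
noncomputable def quadForm (X : Lp (EuclideanSpace ℝ (Fin n)) 2 μ) :
    (EuclideanSpace ℝ (Fin n) →L[ℝ] EuclideanSpace ℝ (Fin n)) →L[ℝ] ℝ :=
  LinearMap.mkContinuous
    { toFun := fun A => ⟪X, A.compLp X⟫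
      map_add' := fun A B => by simp [add_compLp, inner_add_right]
      map_smul' := fun r A => by simp [smul_compLp, real_inner_smul_right] }
    (‖X‖ * ‖X‖) (fun A => by
      calc ‖⟪X, A.compLp X⟫‖ ≤ ‖X‖ * ‖A.compLp X‖ := norm_inner_le_norm _ _
        _ ≤ ‖X‖ * (‖A‖ * ‖X‖) :=
            mul_le_mul_of_nonneg_left (norm_compLp_le A X) (norm_nonneg _)
        _ = ‖X‖ * ‖X‖ * ‖A‖ := by ring)

@[simp] lemma quadForm_apply (X : Lp (EuclideanSpace ℝ (Fin n)) 2 μ)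
    (A : EuclideanSpace ℝ (Fin n) →L[ℝ] EuclideanSpace ℝ (Fin n)) :
    quadForm μ X A = ⟪X, A.compLp X⟫ := rfl

lemma quadForm_eq (X : Lp (EuclideanSpace ℝ (Fin n)) 2 μ)
    (A : EuclideanSpace ℝ (Fin n) →L[ℝ] EuclideanSpace ℝ (Fin n)) :
    quadForm μ X A = ∫ ω, ⟪X ω, A (X ω)⟫ ∂μ := by
  rw [quadForm_apply, L2.inner_def]
  refine integral_congr_ae ?_
  filter_upwards [A.coeFn_compLp' X] with ω hω
  rw [hω]

/-- `A ↦ ⟪v, A v⟫` as a continuous linear functional on operators. -/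
noncomputable def vecForm {E : Type*} [NormedAddCommGroup E] [InnerProductSpace ℝ E] (v : E) :
    (E →L[ℝ] E) →L[ℝ] ℝ :=
  LinearMap.mkContinuous
    { toFun := fun A => ⟪v, A v⟫
      map_add' := fun A B => by
        simp [inner_add_right]
      map_smul' := fun r A => by
        simp [real_inner_smul_right] }
    (‖v‖ * ‖v‖) (fun A => by
      calc ‖⟪v, A v⟫‖ ≤ ‖v‖ * ‖A v‖ := norm_inner_le_norm _ _
        _ ≤ ‖v‖ * (‖A‖ * ‖v‖) := mul_le_mul_of_nonneg_left (A.le_opNorm v) (norm_nonneg _)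
        _ = ‖v‖ * ‖v‖ * ‖A‖ := by ring)

@[simp] lemma vecForm_apply {E : Type*} [NormedAddCommGroup E] [InnerProductSpace ℝ E] (v : E)
    (A : E →L[ℝ] E) : vecForm v A = ⟪v, A v⟫ := rfl

/-- Expectation as a continuous linear map `L² → ℝⁿ`, realized as the adjoint of the
constant-function embedding. -/
noncomputable def expectCLM : Lp (EuclideanSpace ℝ (Fin n)) 2 μ →L[ℝ] EuclideanSpace ℝ (Fin n) :=
  adjoint (Lp.constL 2 μ ℝ)

lemma constL_inner (c : EuclideanSpace ℝ (Fin n)) (Y : Lp (EuclideanSpace ℝ (Fin n)) 2 μ) :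
    ⟪(Lp.constL 2 μ ℝ : _ →L[ℝ] Lp (EuclideanSpace ℝ (Fin n)) 2 μ) c, Y⟫
      = ∫ ω, ⟪c, Y ω⟫ ∂μ := by
  rw [L2.inner_def]
  refine integral_congr_ae ?_
  filter_upwards [Lp.coeFn_const 2 μ c] with ω hω
  rw [show ((Lp.constL 2 μ ℝ : _ →L[ℝ] Lp (EuclideanSpace ℝ (Fin n)) 2 μ) c) = Lp.const 2 μ c
    from rfl, hω]
  rfl

lemma expectCLM_apply (Y : Lp (EuclideanSpace ℝ (Fin n)) 2 μ) :
    expectCLM μ Y = expVal μ Y := by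
  have hYint : Integrable (Y : Ω → EuclideanSpace ℝ (Fin n)) μ :=
    (Lp.memLp Y).integrable one_le_two
  refine ext_inner_left ℝ fun v => ?_
  have h1 : ⟪v, expectCLM μ Y⟫ = ∫ ω, ⟪v, Y ω⟫ ∂μ := by
    rw [show expectCLM μ Y = adjoint (Lp.constL 2 μ ℝ) Y from rfl,
      adjoint_inner_right, constL_inner]
  rw [h1]
  exact (innerSL ℝ v).integral_comp_comm hYint

set_option maxHeartbeats 1000000 in
lemma constL_inner_expVal (c : EuclideanSpace ℝ (Fin n)) (Y : Lp (EuclideanSpace ℝ (Fin n)) 2 μ) :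
    ⟪(Lp.constL 2 μ ℝ : _ →L[ℝ] Lp (EuclideanSpace ℝ (Fin n)) 2 μ) c, Y⟫
      = ⟪c, expVal μ Y⟫ := by
  rw [constL_inner]
  exact (innerSL ℝ c).integral_comp_comm ((Lp.memLp Y).integrable one_le_two)

end Forms

set_option maxHeartbeats 1000000 in
/-- in the quadratic case, the function
`V(X,t) = (1/2) E[X* P(t) X] + (1/2)(E X)* Σ(t)(E X)` built from the solutions of the two
Riccati equations solves the Bellman equation on `H × [0,T]` with the prescribed terminal
condition, and its gradient is `D_X V(X,t) = P(t) X + Σ(t) E X`. -/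
theorem statement18 (μ : Measure Ω) [IsProbabilityMeasure μ]
    (Q Qb QT QbT S ST : EuclideanSpace ℝ (Fin n) →L[ℝ] EuclideanSpace ℝ (Fin n))
    (hQ : IsSelfAdjoint Q) (hQb : IsSelfAdjoint Qb)
    (hQT : IsSelfAdjoint QT) (hQbT : IsSelfAdjoint QbT)
    (T lam : ℝ) (hT : 0 < T) (hlam : 0 < lam)
    (P Sg : ℝ → EuclideanSpace ℝ (Fin n) →L[ℝ] EuclideanSpace ℝ (Fin n))
    (hP : ∀ τ ∈ Icc (0 : ℝ) T, HasDerivWithinAt P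
      ((1 / lam) • (P τ ∘L P τ) - (Q + Qb)) (Icc 0 T) τ)
    (hPT : P T = QT + QbT)
    (hSg : ∀ τ ∈ Icc (0 : ℝ) T, HasDerivWithinAt Sg
      ((1 / lam) • (Sg τ ∘L P τ + P τ ∘L Sg τ) + (1 / lam) • (Sg τ ∘L Sg τ)
        - adjoint S ∘L Qb ∘L S + (Qb ∘L S + adjoint S ∘L Qb)) (Icc 0 T) τ)
    (hSgT : Sg T = adjoint ST ∘L QbT ∘L ST - (QbT ∘L ST + adjoint ST ∘L QbT)) :
    ∀ X : Lp (EuclideanSpace ℝ (Fin n)) 2 μ, ∀ t ∈ Icc (0 : ℝ) T,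
      HasGradientAt (fun X' => Vq μ P Sg X' t) (gradQ μ P Sg X t) X ∧
      HasDerivWithinAt (fun τ => Vq μ P Sg X τ)
        (1 / (2 * lam) * ‖gradQ μ P Sg X t‖ ^ 2 -
          (1 / 2 * (∫ ω, ⟪X ω, (Q + Qb) (X ω)⟫ ∂μ) +
            1 / 2 * ⟪expVal μ X,
              (adjoint S ∘L Qb ∘L S - Qb ∘L S - adjoint S ∘L Qb) (expVal μ X)⟫))
        (Icc 0 T) t ∧
      Vq μ P Sg X T =
        1 / 2 * (∫ ω, ⟪X ω, (QT + QbT) (X ω)⟫ ∂μ) +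
          1 / 2 * ⟪expVal μ X,
            (adjoint ST ∘L QbT ∘L ST - QbT ∘L ST - adjoint ST ∘L QbT) (expVal μ X)⟫ := by
  have hPc : ContinuousOn P (Icc 0 T) := fun τ hτ => (hP τ hτ).continuousWithinAt
  have hPsa : ∀ τ ∈ Icc (0:ℝ) T, adjoint (P τ) = P τ := by
    refine P_selfAdjoint hlam hQ hQb hP ?_
    rw [hPT, map_add, isSelfAdjoint_iff'.1 hQT, isSelfAdjoint_iff'.1 hQbT]
  have hSsa : ∀ τ ∈ Icc (0:ℝ) T, adjoint (Sg τ) = Sg τ := by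
    refine Sg_selfAdjoint hlam hQb hPsa hPc hSg ?_
    rw [hSgT]
    simp only [map_sub, map_add, adjoint_comp, adjoint_adjoint, isSelfAdjoint_iff'.1 hQbT]
    ext x
    simp only [ContinuousLinearMap.sub_apply, ContinuousLinearMap.add_apply,
      ContinuousLinearMap.comp_apply]
    abel
  intro X t ht
  have hXint : Integrable (X : Ω → EuclideanSpace ℝ (Fin n)) μ :=
    (Lp.memLp X).integrable one_le_two
  set m := expVal μ X with hm
  set c := Sg t m with hc
  set a := (P t).compLp X with ha
  set b := Lp.const 2 μ c with hb
  -- expectation of (P t) X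
  have hea : expVal μ ((P t).compLp X) = P t m := by
    rw [hm]
    calc (∫ ω, ((P t).compLp X) ω ∂μ) = ∫ ω, P t (X ω) ∂μ := by
          refine integral_congr_ae ?_
          filter_upwards [(P t).coeFn_compLp' X] with ω hω
          rw [hω]
      _ = P t (∫ ω, X ω ∂μ) := (P t).integral_comp_comm hXint
  -- inner product computations
  have haa : ⟪a, a⟫ = quadForm μ X (P t ∘L P t) := by
    rw [L2.inner_def, quadForm_eq]
    refine integral_congr_ae ?_
    filter_upwards [(P t).coeFn_compLp' X] with ω hω
    rw [ha, hω, ContinuousLinearMap.comp_apply, ← adjoint_inner_left (P t), hPsa t ht]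
    exact real_inner_comm _ _
  have hab : ⟪a, b⟫ = ⟪c, P t m⟫ := by
    rw [real_inner_comm, hb, show (Lp.const 2 μ c : Lp (EuclideanSpace ℝ (Fin n)) 2 μ)
      = (Lp.constL 2 μ ℝ) c from rfl, constL_inner_expVal, ha, hea]
  have hbb : ⟪b, b⟫ = ⟪c, c⟫ := by
    rw [hb, show (Lp.const 2 μ c : Lp (EuclideanSpace ℝ (Fin n)) 2 μ)
      = (Lp.constL 2 μ ℝ) c from rfl, constL_inner_expVal]
    congr 1
    rw [expVal]
    calc (∫ ω, ((Lp.constL 2 μ ℝ) c : Lp (EuclideanSpace ℝ (Fin n)) 2 μ) ω ∂μ)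
        = ∫ _ω, c ∂μ := by
          refine integral_congr_ae ?_
          filter_upwards [Lp.coeFn_const 2 μ c] with ω hω
          rw [show (((Lp.constL 2 μ ℝ) c : Lp (EuclideanSpace ℝ (Fin n)) 2 μ) : Ω → _)
            = (Lp.const 2 μ c : Lp (EuclideanSpace ℝ (Fin n)) 2 μ) from rfl, hω]
          rfl
      _ = c := by simp
  have hpsg1 : vecForm m (Sg t ∘L P t) = ⟪c, P t m⟫ := by
    rw [vecForm_apply, ContinuousLinearMap.comp_apply, ← adjoint_inner_left (Sg t), hSsa t ht, hc]
  have hpsg2 : vecForm m (P t ∘L Sg t) = ⟪c, P t m⟫ := by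
    rw [vecForm_apply, ContinuousLinearMap.comp_apply, ← adjoint_inner_left (P t), hPsa t ht, hc,
      real_inner_comm]
  have hsgsg : vecForm m (Sg t ∘L Sg t) = ⟪c, c⟫ := by
    rw [vecForm_apply, ContinuousLinearMap.comp_apply, ← adjoint_inner_left (Sg t), hSsa t ht, hc]
  -- the key norm identity
  have hnorm : ‖gradQ μ P Sg X t‖ ^ 2 = quadForm μ X (P t ∘L P t) +
      (vecForm m (Sg t ∘L P t) + vecForm m (P t ∘L Sg t) + vecForm m (Sg t ∘L Sg t)) := by
    have hgq : gradQ μ P Sg X t = a + b := rfl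
    rw [hgq, norm_add_sq_real, ← real_inner_self_eq_norm_sq a, ← real_inner_self_eq_norm_sq b,
      haa, hab, hbb, hpsg1, hpsg2, hsgsg]
    ring
  refine ⟨?_, ?_, ?_⟩
  · -- gradient
    set M := (P t).compLpL 2 μ with hMdef
    set cL := (Lp.constL 2 μ ℝ : EuclideanSpace ℝ (Fin n) →L[ℝ]
      Lp (EuclideanSpace ℝ (Fin n)) 2 μ) with hcLdef
    set e := expectCLM (n := n) μ with hedef
    set A := M + cL ∘L (Sg t) ∘L e with hAdef
    have hMinner : ∀ u v : Lp (EuclideanSpace ℝ (Fin n)) 2 μ, ⟪M u, v⟫ = ⟪u, M v⟫ := by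
      intro u v
      rw [L2.inner_def, L2.inner_def]
      refine integral_congr_ae ?_
      filter_upwards [coeFn_compLpL (P t) u, coeFn_compLpL (P t) v] with ω h1 h2
      rw [← hMdef] at h1 h2
      rw [h1, h2]
      exact sa_inner (hPsa t ht) _ _
    have hcinner : ∀ (z : EuclideanSpace ℝ (Fin n)) (Y : Lp (EuclideanSpace ℝ (Fin n)) 2 μ),
        ⟪cL z, Y⟫ = ⟪z, e Y⟫ := by
      intro z Y
      rw [constL_inner_expVal, hedef, expectCLM_apply]
    have hAsa : ∀ u v : Lp (EuclideanSpace ℝ (Fin n)) 2 μ, ⟪A u, v⟫ = ⟪u, A v⟫ := by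
      intro u v
      rw [hAdef]
      simp only [ContinuousLinearMap.add_apply, ContinuousLinearMap.comp_apply]
      rw [inner_add_left, inner_add_right, hMinner]
      congr 1
      calc ⟪cL (Sg t (e u)), v⟫ = ⟪Sg t (e u), e v⟫ := hcinner _ _
        _ = ⟪e u, Sg t (e v)⟫ := sa_inner (hSsa t ht) _ _
        _ = ⟪u, cL (Sg t (e v))⟫ := by
            rw [real_inner_comm, ← hcinner, real_inner_comm]
    have hfun : (fun X' => Vq μ P Sg X' t) = fun Y => 1 / 2 * ⟪Y, A Y⟫ := by
      funext Y
      have h1 : ⟪Y, A Y⟫ = ⟪Y, M Y⟫ + ⟪Y, cL (Sg t (e Y))⟫ := by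
        rw [hAdef]
        simp only [ContinuousLinearMap.add_apply, ContinuousLinearMap.comp_apply,
          inner_add_right]
      have h2 : ⟪Y, M Y⟫ = ∫ ω, ⟪Y ω, P t (Y ω)⟫ ∂μ := by
        rw [L2.inner_def]
        refine integral_congr_ae ?_
        filter_upwards [coeFn_compLpL (P t) Y] with ω hω
        rw [hMdef, hω]
      have h3 : ⟪Y, cL (Sg t (e Y))⟫ = ⟪expVal μ Y, Sg t (expVal μ Y)⟫ := by
        rw [real_inner_comm, hcinner, hedef, expectCLM_apply, real_inner_comm]
      rw [Vq, h1, h2, h3]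
      ring
    have hgr : gradQ μ P Sg X t = A X := by
      have h4 : A X = M X + cL (Sg t (e X)) := by
        rw [hAdef]
        simp only [ContinuousLinearMap.add_apply, ContinuousLinearMap.comp_apply]
      rw [gradQ, h4, hedef, expectCLM_apply]
      rfl
    rw [hfun, hgr]
    exact hasGradientAt_half_inner A hAsa X
  · -- time derivative
    have hVeq : ∀ τ, Vq μ P Sg X τ =
        1 / 2 * quadForm μ X (P τ) + 1 / 2 * vecForm m (Sg τ) := by
      intro τ
      rw [Vq, quadForm_eq, hm]
      rfl
    have hder : HasDerivWithinAt
        (fun τ => 1 / 2 * quadForm μ X (P τ) + 1 / 2 * vecForm m (Sg τ))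
        (1 / 2 * quadForm μ X ((1 / lam) • (P t ∘L P t) - (Q + Qb)) +
          1 / 2 * vecForm m ((1 / lam) • (Sg t ∘L P t + P t ∘L Sg t) + (1 / lam) • (Sg t ∘L Sg t)
            - adjoint S ∘L Qb ∘L S + (Qb ∘L S + adjoint S ∘L Qb))) (Icc 0 T) t := by
      exact ((HasFDerivAt.comp_hasDerivWithinAt t (quadForm μ X).hasFDerivAt
        (hP t ht)).const_mul _).add
        ((HasFDerivAt.comp_hasDerivWithinAt t (vecForm m).hasFDerivAt (hSg t ht)).const_mul _)
    have hval : 1 / (2 * lam) * ‖gradQ μ P Sg X t‖ ^ 2 -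
        (1 / 2 * (∫ ω, ⟪X ω, (Q + Qb) (X ω)⟫ ∂μ) +
          1 / 2 * ⟪expVal μ X,
            (adjoint S ∘L Qb ∘L S - Qb ∘L S - adjoint S ∘L Qb) (expVal μ X)⟫) =
        1 / 2 * quadForm μ X ((1 / lam) • (P t ∘L P t) - (Q + Qb)) +
          1 / 2 * vecForm m ((1 / lam) • (Sg t ∘L P t + P t ∘L Sg t) + (1 / lam) • (Sg t ∘L Sg t)
            - adjoint S ∘L Qb ∘L S + (Qb ∘L S + adjoint S ∘L Qb)) := by
      have hQint : (∫ ω, ⟪X ω, (Q + Qb) (X ω)⟫ ∂μ) = quadForm μ X (Q + Qb) :=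
        (quadForm_eq μ X _).symm
      have hSvec : ⟪expVal μ X,
          (adjoint S ∘L Qb ∘L S - Qb ∘L S - adjoint S ∘L Qb) (expVal μ X)⟫ =
          vecForm m (adjoint S ∘L Qb ∘L S) - vecForm m (Qb ∘L S) -
            vecForm m (adjoint S ∘L Qb) := by
        rw [← hm]
        simp only [vecForm_apply, ContinuousLinearMap.sub_apply, inner_sub_right]
      rw [hnorm, hQint, hSvec]
      simp only [map_sub, map_add, _root_.map_smul, smul_eq_mul]
      have hl : lam ≠ 0 := ne_of_gt hlam
      field_simp
      ring
    rw [show (fun τ => Vq μ P Sg X τ) =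
      (fun τ => 1 / 2 * quadForm μ X (P τ) + 1 / 2 * vecForm m (Sg τ)) from funext hVeq, hval]
    exact hder
  · -- terminal condition
    rw [show Vq μ P Sg X T = 1 / 2 * (∫ ω, ⟪X ω, P T (X ω)⟫ ∂μ) +
      1 / 2 * ⟪expVal μ X, Sg T (expVal μ X)⟫ from rfl, hPT, hSgT, sub_add_eq_sub_sub]
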